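/- Let M be a finite-dimensional module over a finite-dimensional algebra such that M is multiplicity-free (each simple occurs at most once as a composition factor) and self-dual, and each of its composition factors is self-dual. Then M is semisimple. -/

import Mathlib

open Module

section Aux

variable {A : Type*} [Ring A] [Algebra ℂ A]
    {M : Type*} [AddCommGroup M] [Module ℂ M] [Module A M] [IsScalarTower ℂ A M]

/-- The left orthogonal of a submodule w.r.t. a σ-contravariant pairing. -/
def lorth (σ : A →ₗ[ℂ] A) (β : M →ₗ[ℂ] M →ₗ[ℂ] ℂ)
    (hβ : ∀ (a : A) (m y : M), β (a • m) y = β m (σ a • y))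
    (N : Submodule A M) : Submodule A M where
  carrier := {m | ∀ n ∈ N, β m n = 0}
  add_mem' := fun {x y} hx hy n hn => by
    simp [hx n hn, hy n hn]
  zero_mem' := fun n hn => by simp
  smul_mem' := fun a m hm n hn => by
    rw [hβ]; exact hm _ (N.smul_mem _ hn)

theorem mem_lorth {σ : A →ₗ[ℂ] A} {β : M →ₗ[ℂ] M →ₗ[ℂ] ℂ}
    {hβ : ∀ (a : A) (m y : M), β (a • m) y = β m (σ a • y)}
    {N : Submodule A M} {m : M} :
    m ∈ lorth σ β hβ N ↔ ∀ n ∈ N, β m n = 0 := Iff.rfl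

variable [FiniteDimensional ℂ M]

/-- β, viewed as a map to the dual, is bijective. -/
theorem beta_bijective (β : M →ₗ[ℂ] M →ₗ[ℂ] ℂ)
    (hβnd : ∀ m : M, (∀ y : M, β m y = 0) → m = 0) :
    Function.Bijective β := by
  have hinj : Function.Injective β := by
    rw [← LinearMap.ker_eq_bot, Submodule.eq_bot_iff]
    intro m hm
    exact hβnd m (fun y => by
      rw [LinearMap.mem_ker] at hm; rw [hm]; rfl)
  exact ⟨hinj, (LinearMap.injective_iff_surjective_of_finrank_eq_finrank
    (Subspace.dual_finrank_eq (V := M)).symm).mp hinj⟩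

set_option maxHeartbeats 2000000 in
/-- No simple submodule is totally isotropic. -/
theorem no_isotropic_atom (σ : A →ₗ[ℂ] A) (β : M →ₗ[ℂ] M →ₗ[ℂ] ℂ)
    (hβnd : ∀ m : M, (∀ y : M, β m y = 0) → m = 0)
    (hβ : ∀ (a : A) (m y : M), β (a • m) y = β m (σ a • y))
    (hMF : ∀ P₁ Q₁ P₂ Q₂ : Submodule A M, P₁ ≤ Q₁ → Q₁ ≤ P₂ → P₂ ≤ Q₂ →
      IsSimpleModule A (↥Q₁ ⧸ P₁.comap Q₁.subtype) →
      IsSimpleModule A (↥Q₂ ⧸ P₂.comap Q₂.subtype) →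
      IsEmpty ((↥Q₁ ⧸ P₁.comap Q₁.subtype) ≃ₗ[A] (↥Q₂ ⧸ P₂.comap Q₂.subtype)))
    (hfactors : ∀ P Q : Submodule A M, P ≤ Q →
      IsSimpleModule A (↥Q ⧸ P.comap Q.subtype) →
      ∃ γ : (↥Q ⧸ P.comap Q.subtype) →ₗ[ℂ] (↥Q ⧸ P.comap Q.subtype) →ₗ[ℂ] ℂ,
        (∀ u, (∀ y, γ u y = 0) → u = 0) ∧
        ∀ (a : A) (u y), γ (a • u) y = γ u (σ a • y))
    (T : Submodule A M) (hT : IsAtom T)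
    (hTT : ∀ t ∈ T, ∀ t' ∈ T, β t t' = 0) : False := by
  haveI hTsimp : IsSimpleModule A T := isSimpleModule_iff_isAtom.mpr hT
  -- the quotient `T ⧸ ⊥` is isomorphic to `T`
  have e0 : (↥T ⧸ ((⊥ : Submodule A M).comap T.subtype)) ≃ₗ[A] T :=
    Submodule.quotEquivOfEqBot _ (by simp)
  haveI : IsSimpleModule A (↥T ⧸ ((⊥ : Submodule A M).comap T.subtype)) :=
    IsSimpleModule.congr e0
  obtain ⟨γ, hγnd, hγa⟩ := hfactors ⊥ T bot_le this
  -- finite dimensionality of T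
  haveI : FiniteDimensional ℂ T :=
    FiniteDimensional.of_injective ((T.subtype).restrictScalars ℂ) T.injective_subtype
  -- the pairing γ transported to T, as a map into the dual
  have he0c : ∀ (c : ℂ) (u : ↥T), e0.symm (c • u) = c • e0.symm u := by
    intro c u
    rw [← algebraMap_smul A c u, map_smul, algebraMap_smul]
  set gT : ↥T →ₗ[ℂ] Module.Dual ℂ ↥T :=
    { toFun := fun u => (γ (e0.symm u)).comp (e0.symm.toLinearMap.restrictScalars ℂ)
      map_add' := by intro u v; ext y; simp only [LinearMap.comp_apply, map_add, LinearMap.add_apply]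
      map_smul' := by
        intro c u; ext y
        simp only [LinearMap.comp_apply, LinearMap.coe_restrictScalars,
          LinearEquiv.coe_coe, RingHom.id_apply, LinearMap.smul_apply, smul_eq_mul]
        rw [he0c, map_smul, LinearMap.smul_apply, smul_eq_mul] } with hgTdef
  have hgT_apply : ∀ u y : ↥T, gT u y = γ (e0.symm u) (e0.symm y) := fun _ _ => rfl
  clear_value gT
  have hgT_inj : Function.Injective gT := by
    intro u v huv
    have h2 : ∀ y', γ (e0.symm u) y' = γ (e0.symm v) y' := by
      intro y'
      have := congrArg (fun ff => ff (e0 y')) huv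
      simpa only [hgT_apply, e0.symm_apply_apply] using this
    have h3 : e0.symm u - e0.symm v = 0 := by
      apply hγnd
      intro y
      rw [map_sub, LinearMap.sub_apply, h2 y, sub_self]
    exact e0.symm.injective (by rwa [sub_eq_zero] at h3)
  have hgT_bij : Function.Bijective gT :=
    ⟨hgT_inj, (LinearMap.injective_iff_surjective_of_finrank_eq_finrank
    (Subspace.dual_finrank_eq (V := ↥T)).symm).mp hgT_inj⟩
  set g := LinearEquiv.ofBijective gT hgT_bij with hgdef
  have hg_apply : ∀ u : ↥T, g u = gT u := fun _ => rfl
  clear_value g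
  -- the "dual pairing with T" map
  set d : M →ₗ[ℂ] Module.Dual ℂ ↥T :=
    { toFun := fun m => (β m).comp ((T.subtype).restrictScalars ℂ)
      map_add' := by intro x y; ext t; simp
      map_smul' := by intro c x; ext t; simp } with hddef
  have hd_apply : ∀ (m : M) (t : ↥T), d m t = β m t := fun _ _ => rfl
  clear_value d
  have hkey : ∀ (m : M) (t : ↥T), gT (g.symm (d m)) t = β m t := by
    intro m t
    rw [← hg_apply, g.apply_symm_apply, hd_apply]
  set Ψfun : M → ↥T := fun m => g.symm (d m) with hΨfundef
  have hkey2 : ∀ (m : M) (t : ↥T), gT (Ψfun m) t = β m t := hkey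
  clear_value Ψfun
  have hadd : ∀ x y : M, Ψfun (x + y) = Ψfun x + Ψfun y := by
    intro x y
    rw [hΨfundef]
    simp only [map_add]
  have hsmul : ∀ (a : A) (m : M), Ψfun (a • m) = a • Ψfun m := by
    intro a m
    apply hgT_inj
    apply LinearMap.ext
    intro t
    calc gT (Ψfun (a • m)) t = β (a • m) t := hkey2 (a • m) t
      _ = β m (σ a • (t : M)) := hβ a m t
      _ = β m ((σ a • t : ↥T) : M) := rfl
      _ = gT (Ψfun m) (σ a • t) := (hkey2 m (σ a • t)).symm
      _ = γ (e0.symm (Ψfun m)) (e0.symm (σ a • t)) := hgT_apply _ _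
      _ = γ (e0.symm (Ψfun m)) (σ a • e0.symm t) :=
            congrArg (fun z => γ (e0.symm (Ψfun m)) z) (e0.symm.map_smul (σ a) t)
      _ = γ (a • e0.symm (Ψfun m)) (e0.symm t) := (hγa a _ _).symm
      _ = γ (e0.symm (a • Ψfun m)) (e0.symm t) :=
            (congrArg (fun z => γ z (e0.symm t)) (e0.symm.map_smul a (Ψfun m))).symm
      _ = gT (a • Ψfun m) t := (hgT_apply _ _).symm
  set Ψa : M →ₗ[A] ↥T :=
    { toFun := Ψfun
      map_add' := hadd
      map_smul' := hsmul } with hΨadef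
  have hΨa_apply : ∀ m : M, Ψa m = Ψfun m := fun _ => rfl
  clear_value Ψa
  set V := lorth σ β hβ T with hV
  have hkerΨa : ∀ m : M, Ψa m = 0 ↔ m ∈ V := by
    intro m
    rw [hΨa_apply, mem_lorth, hΨfundef]
    show g.symm (d m) = 0 ↔ _
    constructor
    · intro h n hn
      have hd0 : d m = 0 := by
        rw [LinearEquiv.map_eq_zero_iff g.symm] at h
        exact h
      have := congrArg (fun f => f (⟨n, hn⟩ : ↥T)) hd0
      simpa [hd_apply] using this
    · intro h
      have : d m = 0 := by
        ext t; simpa [hd_apply] using h t t.2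
      rw [this, map_zero]
  have hVker : V = LinearMap.ker Ψa := by
    ext m; rw [LinearMap.mem_ker, hkerΨa]
  set Ψ : (M ⧸ V) →ₗ[A] ↥T := V.liftQ Ψa hVker.le with hΨdef
  have hΨmk : ∀ m : M, Ψ (Submodule.Quotient.mk m) = Ψa m := fun _ => rfl
  have hΨ_inj : Function.Injective Ψ := by
    rw [← LinearMap.ker_eq_bot, hΨdef]
    exact Submodule.ker_liftQ_eq_bot' V Ψa hVker
  clear_value Ψ
  have hΨ_surj : Function.Surjective Ψ := by
    rw [← LinearMap.range_eq_top]
    rcases hTsimp.1.2 (LinearMap.range Ψ) with h | h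
    · exfalso
      -- then β m t = 0 for all m and t ∈ T, so T = ⊥
      have hβT : ∀ (m : M), ∀ t ∈ T, β m t = 0 := by
        intro m t ht
        have hz : Ψ (Submodule.Quotient.mk m) = 0 := by
          have : Ψ (Submodule.Quotient.mk m) ∈ LinearMap.range Ψ :=
            ⟨Submodule.Quotient.mk m, rfl⟩
          rwa [h, Submodule.mem_bot] at this
        rw [hΨmk] at hz
        exact (hkerΨa m).mp hz t ht
      have hTbot : T = ⊥ := by
        rw [Submodule.eq_bot_iff]
        intro t ht
        rw [← Module.forall_dual_apply_eq_zero_iff (R := ℂ)]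
        intro φ
        obtain ⟨m, hm⟩ := (beta_bijective β hβnd).2 φ
        rw [← hm]; exact hβT m t ht
      exact hT.1 hTbot
    · exact h
  have eΨ : (M ⧸ V) ≃ₗ[A] ↥T := LinearEquiv.ofBijective Ψ ⟨hΨ_inj, hΨ_surj⟩
  -- quotient of ⊤ equiv quotient of M
  have hmap : (V.comap (⊤ : Submodule A M).subtype).map
      ((Submodule.topEquiv : (⊤ : Submodule A M) ≃ₗ[A] M) : (⊤ : Submodule A M) →ₗ[A] M) = V := by
    ext x
    simp only [Submodule.mem_map, Submodule.mem_comap]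
    constructor
    · rintro ⟨y, hy, rfl⟩; exact hy
    · intro hx; exact ⟨⟨x, trivial⟩, hx, rfl⟩
  have eX : (↥(⊤ : Submodule A M) ⧸ V.comap (⊤ : Submodule A M).subtype) ≃ₗ[A] (M ⧸ V) :=
    Submodule.Quotient.equiv _ V Submodule.topEquiv hmap
  haveI : IsSimpleModule A
      (↥(⊤ : Submodule A M) ⧸ V.comap (⊤ : Submodule A M).subtype) :=
    IsSimpleModule.congr (eX.trans eΨ)
  have hTV : T ≤ V := fun t ht => fun t' ht' => hTT t ht t' ht'
  exact (hMF ⊥ T V ⊤ bot_le hTV le_top ‹_› ‹_›).false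
    (e0.trans (eΨ.symm.trans eX.symm))

end Aux

theorem stmt7 (A : Type*) [Ring A] [Algebra ℂ A]
    (M : Type*) [AddCommGroup M] [Module ℂ M] [Module A M] [IsScalarTower ℂ A M]
    [FiniteDimensional ℂ M]
    (σ : A →ₗ[ℂ] A) (hσmul : ∀ a b : A, σ (a * b) = σ b * σ a) (hσone : σ 1 = 1)
    (β : M →ₗ[ℂ] M →ₗ[ℂ] ℂ)
    (hβnd : ∀ m : M, (∀ y : M, β m y = 0) → m = 0)
    (hβ : ∀ (a : A) (m y : M), β (a • m) y = β m (σ a • y))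
    (hMF : ∀ P₁ Q₁ P₂ Q₂ : Submodule A M, P₁ ≤ Q₁ → Q₁ ≤ P₂ → P₂ ≤ Q₂ →
      IsSimpleModule A (↥Q₁ ⧸ P₁.comap Q₁.subtype) →
      IsSimpleModule A (↥Q₂ ⧸ P₂.comap Q₂.subtype) →
      IsEmpty ((↥Q₁ ⧸ P₁.comap Q₁.subtype) ≃ₗ[A] (↥Q₂ ⧸ P₂.comap Q₂.subtype)))
    (hfactors : ∀ P Q : Submodule A M, P ≤ Q →
      IsSimpleModule A (↥Q ⧸ P.comap Q.subtype) →
      ∃ γ : (↥Q ⧸ P.comap Q.subtype) →ₗ[ℂ] (↥Q ⧸ P.comap Q.subtype) →ₗ[ℂ] ℂ,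
        (∀ u, (∀ y, γ u y = 0) → u = 0) ∧
        ∀ (a : A) (u y), γ (a • u) y = γ u (σ a • y)) :
    IsSemisimpleModule A M := by
  haveI : IsArtinian A M := isArtinian_of_tower ℂ inferInstance
  haveI : IsAtomic (Submodule A M) :=
    isAtomic_of_orderBot_wellFounded_lt IsWellFounded.wf
  set S : Submodule A M := sSup { m : Submodule A M | IsSimpleModule A m } with hS
  -- the left orthogonal of the socle is trivial
  have horthS : lorth σ β hβ S = ⊥ := by
    rcases (IsAtomic.eq_bot_or_exists_atom_le (lorth σ β hβ S)) with h | ⟨T, hT, hTle⟩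
    · exact h
    · exfalso
      have hTS : T ≤ S := le_sSup (isSimpleModule_iff_isAtom.mpr hT)
      exact no_isotropic_atom σ β hβnd hβ hMF hfactors T hT
        (fun t ht t' ht' => hTle ht t' (hTS ht'))
  -- hence the socle is everything
  have hStop : S = ⊤ := by
    by_contra hne
    have : ∃ x : M, x ∉ S := by
      by_contra h
      push_neg at h
      exact hne (Submodule.eq_top_iff'.mpr h)
    obtain ⟨x, hx⟩ := this
    -- find a functional vanishing on S but not at x, via the quotient by S as a ℂ-subspace
    set Sc : Submodule ℂ M := S.restrictScalars ℂ with hSc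
    have hxq : (Sc.mkQ x : M ⧸ Sc) ≠ 0 := by
      intro h
      rw [Submodule.mkQ_apply, Submodule.Quotient.mk_eq_zero Sc] at h
      exact hx h
    have : ∃ φ : Module.Dual ℂ (M ⧸ Sc), φ (Sc.mkQ x) ≠ 0 := by
      by_contra h
      push_neg at h
      exact hxq ((Module.forall_dual_apply_eq_zero_iff ℂ _).mp h)
    obtain ⟨φ, hφ⟩ := this
    set f : Module.Dual ℂ M := φ.comp Sc.mkQ with hf
    obtain ⟨m, hm⟩ := (beta_bijective β hβnd).2 f
    have hmV : m ∈ lorth σ β hβ S := by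
      intro n hn
      have hfn : f n = 0 := by
        have hnc : n ∈ Sc := hn
        rw [hf, LinearMap.comp_apply, Submodule.mkQ_apply,
          (Submodule.Quotient.mk_eq_zero Sc).mpr hnc, map_zero]
      rw [← hfn, ← hm]
    rw [horthS, Submodule.mem_bot] at hmV
    subst hmV
    apply hφ
    have h0 : f x = 0 := by rw [← hm]; simp
    rw [hf, LinearMap.comp_apply] at h0
    exact h0
  exact IsSemisimpleModule.of_sSup_simples_eq_top hStop
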